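/- arXiv:2202.12794 — 2 statements merged into one kernel-verified Lean document; each statement's English description precedes it below -/
import Mathlib

section
/- The function Ê : S² → [0,∞) defined by the colloid minimization problem is Lipschitz continuous: there is a constant C, depending only on G and F_s, such that |Ê(n1) − Ê(n2)| ≤ C |n1 − n2| for all n1, n2 ∈ S². -/
set_option maxHeartbeats 1000000


open MeasureTheory Filter Metric Real Asymptotics
open scoped ENNReal NNReal Topology

noncomputable section

/-- Three-dimensional Euclidean space. -/
abbrev E3 : Type := EuclideanSpace ℝ (Fin 3)

/-- `|∇f|²`, the squared Frobenius norm of the gradient of `f`. -/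
def gradSq (f : E3 → E3) (x : E3) : ℝ :=
  ∑ i : Fin 3, ‖fderiv ℝ f x (EuclideanSpace.single i (1 : ℝ))‖ ^ 2

/-- The Dirichlet energy `∫_s |∇f|²`, valued in `[0,∞]`. -/
def eEnergy (s : Set E3) (f : E3 → E3) : ℝ≥0∞ :=
  ∫⁻ x in s, ENNReal.ofReal (gradSq f x)

/-- `f` takes values in the unit sphere `S²` on `s`. -/
def UnitValuedOn (f : E3 → E3) (s : Set E3) : Prop := ∀ x ∈ s, ‖f x‖ = 1

/-- A smooth bounded domain in `ℝ³`: a bounded open set which is the sublevel set of a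
smooth function with nonvanishing gradient on the boundary. -/
def SmoothBoundedDomain (G : Set E3) : Prop :=
  IsOpen G ∧ Bornology.IsBounded G ∧ G.Nonempty ∧
  ∃ f : E3 → ℝ, ContDiff ℝ (⊤ : ℕ∞) f ∧ G = {x : E3 | f x < 0} ∧
    ∀ x ∈ frontier G, fderiv ℝ f x ≠ 0

/-- The total energy `E(n) = ∫_{ℝ³∖G} |∇n|² + F_s(n|_{∂G})`, where the surface energy `Fs`
depends only on the boundary trace (see `TraceInvariant`). -/
def energyC (G : Set E3) (Fs : (E3 → E3) → ℝ≥0∞) (n : E3 → E3) : ℝ≥0∞ :=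
  eEnergy Gᶜ n + Fs n

/-- `Fs` is a surface energy: it depends only on the restriction of maps to `∂G`. -/
def TraceInvariant (G : Set E3) (Fs : (E3 → E3) → ℝ≥0∞) : Prop :=
  ∀ n m : E3 → E3, (∀ x ∈ frontier G, n x = m x) → Fs n = Fs m

/-- The admissible class for the minimization problem defining `Ê(n0)`: `S²`-valued maps on
`ℝ³∖G` with `∫ |n-n0|²/(1+r²) < ∞` and `∫ |∇n|² < ∞`. -/
def AdmissibleC (G : Set E3) (n0 : E3) (n : E3 → E3) : Prop :=
  UnitValuedOn n Gᶜ ∧ (∀ x ∈ (closure G)ᶜ, DifferentiableAt ℝ n x) ∧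
  (∫⁻ x in Gᶜ, (‖n x - n0‖₊ : ℝ≥0∞) ^ 2 / (1 + (‖x‖₊ : ℝ≥0∞) ^ 2)) < ⊤ ∧
  eEnergy Gᶜ n < ⊤

/-- The minimal energy `Ê(n0)` with far-field alignment `n0`. -/
def Ehat (G : Set E3) (Fs : (E3 → E3) → ℝ≥0∞) (n0 : E3) : ℝ≥0∞ :=
  ⨅ (n : E3 → E3) (_ : AdmissibleC G n0 n), energyC G Fs n

/-- `n` is a minimizer achieving `Ê(n0)`. -/
def IsMinimizerC (G : Set E3) (Fs : (E3 → E3) → ℝ≥0∞) (n0 : E3) (n : E3 → E3) : Prop :=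
  AdmissibleC G n0 n ∧ energyC G Fs n = Ehat G Fs n0

local notation "⟪" x ", " y "⟫" => @inner ℝ _ _ x y

lemma exists_unit_perp (u : E3) : ∃ e : E3, ⟪u, e⟫ = 0 ∧ ‖e‖ = 1 := by
  obtain ⟨y, hy, hy0⟩ : ∃ y : E3, ⟪u, y⟫ = 0 ∧ y ≠ 0 := by
    by_contra h
    push_neg at h
    have hinj : Function.Injective ((innerSL ℝ u : E3 →L[ℝ] ℝ) : E3 →ₗ[ℝ] ℝ) := by
      intro a b hab
      have hab' : (⟪u, a⟫ : ℝ) = ⟪u, b⟫ := by simpa using hab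
      have h1 : ⟪u, a - b⟫ = 0 := by
        rw [inner_sub_right, hab', sub_self]
      by_contra hne
      exact hne (sub_eq_zero.mp (by by_contra h2; exact h2 (h _ h1)))
    have h3 : Module.finrank ℝ E3 ≤ Module.finrank ℝ ℝ :=
      LinearMap.finrank_le_finrank_of_injective hinj
    simp [finrank_euclideanSpace] at h3
  refine ⟨‖y‖⁻¹ • y, ?_, norm_smul_inv_norm hy0⟩
  rw [real_inner_smul_right, hy, mul_zero]

/-- Rotation by angle `s` in the plane spanned by the orthonormal pair `e1, e2`. -/
def pMap (e1 e2 : E3) : E3 →L[ℝ] E3 :=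
  (innerSL ℝ e1).smulRight e1 + (innerSL ℝ e2).smulRight e2

def qMap (e1 e2 : E3) : E3 →L[ℝ] E3 :=
  (innerSL ℝ e1).smulRight e2 - (innerSL ℝ e2).smulRight e1

def rotCLM (e1 e2 : E3) (s : ℝ) : E3 →L[ℝ] E3 :=
  ContinuousLinearMap.id ℝ E3 + (Real.cos s - 1) • pMap e1 e2 + Real.sin s • qMap e1 e2

lemma pMap_apply (e1 e2 y : E3) : pMap e1 e2 y = ⟪e1, y⟫ • e1 + ⟪e2, y⟫ • e2 := by
  simp [pMap]

lemma qMap_apply (e1 e2 y : E3) : qMap e1 e2 y = ⟪e1, y⟫ • e2 - ⟪e2, y⟫ • e1 := by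
  simp [qMap]

lemma rotCLM_apply (e1 e2 : E3) (s : ℝ) (y : E3) :
    rotCLM e1 e2 s y = y + (Real.cos s - 1) • pMap e1 e2 y + Real.sin s • qMap e1 e2 y := by
  simp [rotCLM]

variable {e1 e2 : E3} (h1 : ‖e1‖ = 1) (h2 : ‖e2‖ = 1) (h12 : ⟪e1, e2⟫ = 0)

section ON
include h1 h2 h12

lemma pMap_norm_le (y : E3) : ‖pMap e1 e2 y‖ ≤ ‖y‖ := by
  have h11 : ⟪e1, e1⟫ = 1 := by rw [real_inner_self_eq_norm_sq, h1]; norm_num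
  have h22 : ⟪e2, e2⟫ = 1 := by rw [real_inner_self_eq_norm_sq, h2]; norm_num
  have h21 : ⟪e2, e1⟫ = 0 := by rw [real_inner_comm]; exact h12
  have key : ‖pMap e1 e2 y‖ ^ 2 ≤ ‖y‖ ^ 2 := by
    rw [← real_inner_self_eq_norm_sq, ← real_inner_self_eq_norm_sq, pMap_apply]
    have hb : (0:ℝ) ≤ ⟪y - ⟪e1, y⟫ • e1 - ⟪e2, y⟫ • e2, y - ⟪e1, y⟫ • e1 - ⟪e2, y⟫ • e2⟫ :=
      real_inner_self_nonneg
    simp only [inner_sub_left, inner_sub_right, inner_add_left, inner_add_right,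
      real_inner_smul_left, real_inner_smul_right, h11, h22, h12, h21,
      real_inner_comm y e1, real_inner_comm y e2] at hb ⊢
    nlinarith [hb]
  exact (pow_le_pow_iff_left₀ (norm_nonneg _) (norm_nonneg _) (by norm_num)).mp key

lemma qMap_norm_le (y : E3) : ‖qMap e1 e2 y‖ ≤ ‖y‖ := by
  have h11 : ⟪e1, e1⟫ = 1 := by rw [real_inner_self_eq_norm_sq, h1]; norm_num
  have h22 : ⟪e2, e2⟫ = 1 := by rw [real_inner_self_eq_norm_sq, h2]; norm_num
  have h21 : ⟪e2, e1⟫ = 0 := by rw [real_inner_comm]; exact h12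
  have key : ‖qMap e1 e2 y‖ ^ 2 ≤ ‖y‖ ^ 2 := by
    rw [← real_inner_self_eq_norm_sq, ← real_inner_self_eq_norm_sq, qMap_apply]
    have hb : (0:ℝ) ≤ ⟪y - ⟪e1, y⟫ • e1 - ⟪e2, y⟫ • e2, y - ⟪e1, y⟫ • e1 - ⟪e2, y⟫ • e2⟫ :=
      real_inner_self_nonneg
    simp only [inner_sub_left, inner_sub_right, inner_add_left, inner_add_right,
      real_inner_smul_left, real_inner_smul_right, h11, h22, h12, h21,
      real_inner_comm y e1, real_inner_comm y e2] at hb ⊢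
    nlinarith [hb]
  exact (pow_le_pow_iff_left₀ (norm_nonneg _) (norm_nonneg _) (by norm_num)).mp key

lemma rotCLM_norm (s : ℝ) (y : E3) : ‖rotCLM e1 e2 s y‖ = ‖y‖ := by
  have h11 : ⟪e1, e1⟫ = 1 := by rw [real_inner_self_eq_norm_sq, h1]; norm_num
  have h22 : ⟪e2, e2⟫ = 1 := by rw [real_inner_self_eq_norm_sq, h2]; norm_num
  have h21 : ⟪e2, e1⟫ = 0 := by rw [real_inner_comm]; exact h12
  have key : ‖rotCLM e1 e2 s y‖ ^ 2 = ‖y‖ ^ 2 := by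
    rw [← real_inner_self_eq_norm_sq, ← real_inner_self_eq_norm_sq, rotCLM_apply,
      pMap_apply, qMap_apply]
    have hsc := Real.sin_sq_add_cos_sq s
    simp only [inner_sub_left, inner_sub_right, inner_add_left, inner_add_right,
      real_inner_smul_left, real_inner_smul_right, h11, h22, h12, h21,
      real_inner_comm y e1, real_inner_comm y e2]
    nlinarith [hsc]
  have := congrArg Real.sqrt key
  rwa [Real.sqrt_sq (norm_nonneg _), Real.sqrt_sq (norm_nonneg _)] at this

end ON

/-- Construction of the rotation angle and axis data for two unit vectors. -/
lemma exists_rot (u v : E3) (hu : ‖u‖ = 1) (hv : ‖v‖ = 1) :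
    ∃ (α : ℝ) (e2 : E3), 0 ≤ α ∧ α ≤ 2 * ‖u - v‖ ∧ α ≤ 4 ∧
      ⟪u, e2⟫ = 0 ∧ ‖e2‖ = 1 ∧ v = Real.cos α • u + Real.sin α • e2 := by
  have hcs : |⟪u, v⟫| ≤ 1 := by
    have := abs_real_inner_le_norm u v
    rwa [hu, hv, one_mul] at this
  set α := Real.arccos ⟪u, v⟫ with hα
  have hα0 : 0 ≤ α := Real.arccos_nonneg _
  have hαπ : α ≤ π := Real.arccos_le_pi _
  have hcos : Real.cos α = ⟪u, v⟫ := Real.cos_arccos (neg_le_of_abs_le hcs) (le_of_abs_le hcs)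
  have hα4 : α ≤ 4 := hαπ.trans (by linarith [Real.pi_le_four])
  have hnormsq : ‖u - v‖ ^ 2 = 2 - 2 * Real.cos α := by
    rw [hcos, ← real_inner_self_eq_norm_sq]
    simp only [inner_sub_left, inner_sub_right]
    have h11 : ⟪u, u⟫ = 1 := by rw [real_inner_self_eq_norm_sq, hu]; norm_num
    have h22 : ⟪v, v⟫ = 1 := by rw [real_inner_self_eq_norm_sq, hv]; norm_num
    rw [h11, h22, real_inner_comm v u]; ring
  have hchord : α ≤ 2 * ‖u - v‖ := by
    have hb : Real.cos α ≤ 1 - 2 / π ^ 2 * α ^ 2 :=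
      Real.cos_le_one_sub_mul_cos_sq (by rwa [abs_of_nonneg hα0])
    have hπ : 0 < π := Real.pi_pos
    have hb2 : 2 * (2 / π ^ 2 * α ^ 2) ≤ 2 - 2 * Real.cos α := by linarith
    have h4 : (2 / π * α) ^ 2 ≤ ‖u - v‖ ^ 2 := by
      rw [hnormsq]
      calc (2 / π * α) ^ 2 = 2 * (2 / π ^ 2 * α ^ 2) := by
            field_simp
        _ ≤ 2 - 2 * Real.cos α := hb2
    have h5 : 2 / π * α ≤ ‖u - v‖ :=
      (pow_le_pow_iff_left₀ (by positivity) (norm_nonneg _) (by norm_num)).mp h4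
    have h6 : (1:ℝ) / 2 ≤ 2 / π := by
      rw [div_le_div_iff₀ (by norm_num) hπ]
      nlinarith [Real.pi_le_four]
    have hππ : α / 2 ≤ 2 / π * α := by
      have := mul_le_mul_of_nonneg_right h6 hα0
      calc α / 2 = 1 / 2 * α := by ring
        _ ≤ 2 / π * α := this
    linarith
  have hw : v - ⟪u, v⟫ • u = v - Real.cos α • u := by rw [hcos]
  set w := v - ⟪u, v⟫ • u with hwdef
  have huw : ⟪u, w⟫ = 0 := by
    rw [hwdef]
    simp only [inner_sub_right, real_inner_smul_right]
    rw [real_inner_self_eq_norm_sq, hu]; ring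
  have hwnorm : ‖w‖ = Real.sin α := by
    have h11 : ⟪u, u⟫ = 1 := by rw [real_inner_self_eq_norm_sq, hu]; norm_num
    have hsq : ‖w‖ ^ 2 = Real.sin α ^ 2 := by
      rw [← real_inner_self_eq_norm_sq, hwdef]
      simp only [inner_sub_left, inner_sub_right, real_inner_smul_left, real_inner_smul_right,
        h11, real_inner_comm v u]
      have h22 : ⟪v, v⟫ = 1 := by rw [real_inner_self_eq_norm_sq, hv]; norm_num
      rw [h22]
      have hpyth := Real.sin_sq_add_cos_sq α
      rw [hcos] at hpyth
      have hcomm : (⟪v, u⟫ : ℝ) = ⟪u, v⟫ := real_inner_comm u v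
      nlinarith [hpyth, hcomm]
    have hsin : 0 ≤ Real.sin α := Real.sin_nonneg_of_nonneg_of_le_pi hα0 hαπ
    have := congrArg Real.sqrt hsq
    rwa [Real.sqrt_sq (norm_nonneg _), Real.sqrt_sq hsin] at this
  by_cases hw0 : w = 0
  · obtain ⟨e, he0, he1⟩ := exists_unit_perp u
    refine ⟨α, e, hα0, hchord, hα4, he0, he1, ?_⟩
    have hsin0 : Real.sin α = 0 := by rw [← hwnorm, hw0, norm_zero]
    have : v = ⟪u, v⟫ • u := by
      have := hwdef ▸ hw0
      rwa [sub_eq_zero] at this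
    rw [this, hcos, hsin0, zero_smul, add_zero]
  · refine ⟨α, ‖w‖⁻¹ • w, hα0, hchord, hα4, ?_, norm_smul_inv_norm hw0, ?_⟩
    · rw [real_inner_smul_right, huw, mul_zero]
    · have hsin : Real.sin α = ‖w‖ := hwnorm.symm
      rw [hsin, smul_smul, mul_inv_cancel₀ (norm_ne_zero_iff.mpr hw0), one_smul]
      rw [hwdef, hcos]
      abel



lemma gradSq_nonneg (f : E3 → E3) (x : E3) : 0 ≤ gradSq f x :=
  Finset.sum_nonneg fun _ _ => sq_nonneg _

lemma sq_add_helper (α a b : ℝ) (hα : 0 < α) :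
    (a + b) ^ 2 ≤ (1 + α) * a ^ 2 + (1 + 1/α) * b ^ 2 := by
  have h : α * (a + b) ^ 2 ≤ α * ((1 + α) * a ^ 2 + (1 + 1/α) * b ^ 2) := by
    have h2 : α * (1/α) * b ^ 2 = b ^ 2 := by
      rw [mul_one_div_cancel hα.ne', one_mul]
    nlinarith [sq_nonneg (α * a - b)]
  exact le_of_mul_le_mul_left h hα

/-- The main transfer lemma: from an admissible competitor for `u` we construct one for `v`
at controlled extra cost. -/
lemma transfer (G : Set E3) (hG : SmoothBoundedDomain G) (Fs : (E3 → E3) → ℝ≥0∞)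
    (hFs : TraceInvariant G Fs) :
    ∃ c : ℝ≥0∞, c ≠ ⊤ ∧ ∀ u v : E3, ‖u‖ = 1 → ‖v‖ = 1 → ∀ n : E3 → E3,
      AdmissibleC G u n →
      ∃ m : E3 → E3, AdmissibleC G v m ∧
        energyC G Fs m ≤ energyC G Fs n +
          ENNReal.ofReal ‖u - v‖ * c * (energyC G Fs n + 1) := by
  obtain ⟨hGopen, hGbdd, -, -⟩ := hG
  -- a radius with `closure G ⊆ ball 0 R0`
  obtain ⟨R0, hR0pos, hR0⟩ := (hGbdd.closure).subset_ball_lt 0 0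
  -- the cutoff function
  set φ : E3 → ℝ := fun x => Real.smoothTransition ((‖x‖ ^ 2 - R0 ^ 2) / (3 * R0 ^ 2)) with hφdef
  have hφsm : ContDiff ℝ (⊤ : ℕ∞) φ := by
    exact Real.smoothTransition.contDiff.comp
      (((contDiff_norm_sq ℝ).sub contDiff_const).div_const _)
  have hφ0 : ∀ x : E3, ‖x‖ ≤ R0 → φ x = 0 := by
    intro x hx
    apply Real.smoothTransition.zero_of_nonpos
    apply div_nonpos_of_nonpos_of_nonneg
    · nlinarith [norm_nonneg x]
    · positivity
  have hφ1 : ∀ x : E3, 2 * R0 ≤ ‖x‖ → φ x = 1 := by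
    intro x hx
    apply Real.smoothTransition.one_of_one_le
    rw [le_div_iff₀ (by positivity)]
    nlinarith [norm_nonneg x]
  have hφ01 : ∀ x : E3, 0 ≤ φ x ∧ φ x ≤ 1 := fun x =>
    ⟨Real.smoothTransition.nonneg _, Real.smoothTransition.le_one _⟩
  have hφdiff : Differentiable ℝ φ := hφsm.differentiable (by simp)
  -- vanishing of the gradient far away
  have hdφ0 : ∀ x : E3, 2 * R0 < ‖x‖ → fderiv ℝ φ x = 0 := by
    intro x hx
    have hopen : IsOpen {y : E3 | 2 * R0 < ‖y‖} := isOpen_lt continuous_const continuous_norm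
    have hev : φ =ᶠ[𝓝 x] fun _ => (1 : ℝ) :=
      Filter.eventuallyEq_of_mem (hopen.mem_nhds hx) fun y hy => hφ1 y (le_of_lt hy)
    rw [hev.fderiv_eq, fderiv_fun_const]
    rfl
  -- a bound for the gradient of φ
  obtain ⟨K, hK0, hK⟩ : ∃ K : ℝ, 0 ≤ K ∧ ∀ x : E3, ‖fderiv ℝ φ x‖ ≤ K := by
    have hcont : Continuous fun x : E3 => ‖fderiv ℝ φ x‖ :=
      (hφsm.continuous_fderiv (by simp)).norm
    obtain ⟨K0, hK0⟩ := (isCompact_closedBall (0:E3) (2*R0)).exists_bound_of_continuousOn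
      hcont.continuousOn
    refine ⟨max K0 0, le_max_right _ _, fun x => ?_⟩
    by_cases hx : ‖x‖ ≤ 2 * R0
    · have := hK0 x (by rwa [mem_closedBall_zero_iff])
      simp only [norm_norm] at this
      exact this.trans (le_max_left _ _)
    · rw [hdφ0 x (not_le.mp hx)]
      simpa using le_max_right K0 0
  set c₀ : ℝ≥0∞ := ENNReal.ofReal (60 * K ^ 2) * volume (closedBall (0:E3) (2*R0)) with hc₀def
  have hc₀top : c₀ ≠ ⊤ :=
    ENNReal.mul_ne_top ENNReal.ofReal_ne_top (measure_closedBall_lt_top).ne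
  refine ⟨2 * (1 + c₀), by finiteness, ?_⟩
  intro u v hu hv n hadm
  obtain ⟨hunit, hdiffn, hL2, hEn⟩ := hadm
  obtain ⟨α, e2, hα0, hchord, hα4, hue2, he2, hveq⟩ := exists_rot u v hu hv
  rcases eq_or_lt_of_le hα0 with hαz | hαpos
  · -- α = 0 : then v = u and we can take m = n
    have hvu : v = u := by
      rw [hveq, ← hαz]
      simp
    refine ⟨n, ?_, le_self_add⟩
    rw [hvu]
    exact ⟨hunit, hdiffn, hL2, hEn⟩
  · -- main case `0 < α`
    have hcl : closure G ⊆ ball (0:E3) R0 := hR0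
    have hout : ∀ x : E3, R0 ≤ ‖x‖ → x ∉ closure G := by
      intro x hx hmem
      have := mem_ball_zero_iff.mp (hcl hmem)
      linarith
    set m : E3 → E3 := fun x =>
      n x + (Real.cos (α * φ x) - 1) • pMap u e2 (n x)
        + Real.sin (α * φ x) • qMap u e2 (n x) with hmdef
    have hrot : ∀ x : E3, m x = rotCLM u e2 (α * φ x) (n x) := by
      intro x
      simp only [hmdef]
      rw [rotCLM_apply]
    have hmnorm : ∀ x : E3, ‖m x‖ = ‖n x‖ := fun x => by
      rw [hrot x, rotCLM_norm hu he2 hue2]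
    have hmeq : ∀ x : E3, ‖x‖ ≤ R0 → m x = n x := by
      intro x hx
      simp only [hmdef]
      rw [hφ0 x hx]
      norm_num
    have h11u : ⟪u, u⟫ = 1 := by rw [real_inner_self_eq_norm_sq, hu]; norm_num
    have he2u : ⟪e2, u⟫ = 0 := by rw [real_inner_comm u e2]; exact hue2
    have hrotu : rotCLM u e2 α u = v := by
      rw [rotCLM_apply, pMap_apply, qMap_apply, h11u, he2u, hveq]
      simp only [one_smul, zero_smul, add_zero, sub_zero]
      module
    -- derivative of m
    have hder : ∀ x : E3, DifferentiableAt ℝ n x →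
        HasFDerivAt m
          ((fderiv ℝ n x
            + ((Real.cos (α * φ x) - 1) • ((pMap u e2).comp (fderiv ℝ n x))
              + ((-Real.sin (α * φ x)) • (α • fderiv ℝ φ x)).smulRight (pMap u e2 (n x))))
            + ((Real.sin (α * φ x)) • ((qMap u e2).comp (fderiv ℝ n x))
              + ((Real.cos (α * φ x)) • (α • fderiv ℝ φ x)).smulRight (qMap u e2 (n x)))) x := by
      intro x hx
      have hφd : HasFDerivAt φ (fderiv ℝ φ x) x := (hφdiff x).hasFDerivAt
      have hψ : HasFDerivAt (fun y => α * φ y) (α • fderiv ℝ φ x) x := hφd.const_mul α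
      have hn' : HasFDerivAt n (fderiv ℝ n x) x := hx.hasFDerivAt
      have hpn : HasFDerivAt (fun y => pMap u e2 (n y)) ((pMap u e2).comp (fderiv ℝ n x)) x :=
        (pMap u e2).hasFDerivAt.comp x hn'
      have hqn : HasFDerivAt (fun y => qMap u e2 (n y)) ((qMap u e2).comp (fderiv ℝ n x)) x :=
        (qMap u e2).hasFDerivAt.comp x hn'
      exact (hn'.add (((hψ.cos).sub_const 1).smul hpn)).add ((hψ.sin).smul hqn)
    have happ : ∀ x : E3, DifferentiableAt ℝ n x → ∀ e : E3,
        fderiv ℝ m x e = rotCLM u e2 (α * φ x) (fderiv ℝ n x e)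
          + (α * fderiv ℝ φ x e) •
            ((-Real.sin (α * φ x)) • pMap u e2 (n x) + Real.cos (α * φ x) • qMap u e2 (n x)) := by
      intro x hx e
      rw [(hder x hx).fderiv]
      simp only [ContinuousLinearMap.add_apply, ContinuousLinearMap.smul_apply,
        ContinuousLinearMap.coe_comp', Function.comp_apply, ContinuousLinearMap.smulRight_apply,
        rotCLM_apply, smul_eq_mul]
      module
    -- directional derivative bound
    have hDe : ∀ x : E3, DifferentiableAt ℝ n x → ‖n x‖ = 1 → ∀ κ : ℝ, 0 ≤ κ →
        ‖fderiv ℝ φ x‖ ≤ κ → ∀ i : Fin 3,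
        ‖fderiv ℝ m x (EuclideanSpace.single i (1:ℝ))‖
          ≤ ‖fderiv ℝ n x (EuclideanSpace.single i (1:ℝ))‖ + 2 * (α * κ) := by
      intro x hx hnx κ hκ0 hκ i
      have he : ‖(EuclideanSpace.single i (1:ℝ) : E3)‖ = 1 := by
        rw [EuclideanSpace.norm_single]; norm_num
      rw [happ x hx _]
      refine (norm_add_le _ _).trans ?_
      rw [rotCLM_norm hu he2 hue2]
      have hφe : |fderiv ℝ φ x (EuclideanSpace.single i (1:ℝ))| ≤ κ := by
        have h0 := (fderiv ℝ φ x).le_opNorm (EuclideanSpace.single i (1:ℝ))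
        rw [he, mul_one] at h0
        exact le_trans h0 hκ
      have hz : ‖(-Real.sin (α * φ x)) • pMap u e2 (n x)
          + Real.cos (α * φ x) • qMap u e2 (n x)‖ ≤ 2 := by
        refine (norm_add_le _ _).trans ?_
        rw [norm_smul, norm_smul]
        have hp1 : ‖pMap u e2 (n x)‖ ≤ 1 := by
          have := pMap_norm_le hu he2 hue2 (n x); rwa [hnx] at this
        have hq1 : ‖qMap u e2 (n x)‖ ≤ 1 := by
          have := qMap_norm_le hu he2 hue2 (n x); rwa [hnx] at this
        have hs1 : ‖-Real.sin (α * φ x)‖ ≤ 1 := by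
          rw [norm_neg, Real.norm_eq_abs]
          exact abs_le.mpr ⟨Real.neg_one_le_sin _, Real.sin_le_one _⟩
        have hc1 : ‖Real.cos (α * φ x)‖ ≤ 1 := by
          rw [Real.norm_eq_abs]
          exact abs_le.mpr ⟨Real.neg_one_le_cos _, Real.cos_le_one _⟩
        nlinarith [norm_nonneg (pMap u e2 (n x)), norm_nonneg (qMap u e2 (n x)),
          norm_nonneg (-Real.sin (α * φ x)), norm_nonneg (Real.cos (α * φ x))]
      have h2 : ‖(α * fderiv ℝ φ x (EuclideanSpace.single i (1:ℝ))) •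
          ((-Real.sin (α * φ x)) • pMap u e2 (n x) + Real.cos (α * φ x) • qMap u e2 (n x))‖
          ≤ 2 * (α * κ) := by
        rw [norm_smul, Real.norm_eq_abs, abs_mul, abs_of_nonneg hα0]
        calc α * |fderiv ℝ φ x (EuclideanSpace.single i (1:ℝ))| *
              ‖(-Real.sin (α * φ x)) • pMap u e2 (n x) + Real.cos (α * φ x) • qMap u e2 (n x)‖
            ≤ (α * κ) * 2 := by
              apply mul_le_mul _ hz (norm_nonneg _) (by positivity)
              exact mul_le_mul_of_nonneg_left hφe hα0
          _ = 2 * (α * κ) := by ring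
      linarith [h2]
    -- gradient estimate
    have hgrad : ∀ x : E3, DifferentiableAt ℝ n x → ‖n x‖ = 1 → ∀ κ : ℝ, 0 ≤ κ →
        ‖fderiv ℝ φ x‖ ≤ κ →
        gradSq m x ≤ (1 + α) * gradSq n x + 60 * α * κ ^ 2 := by
      intro x hx hnx κ hκ0 hκ
      have hsum : gradSq m x ≤ ∑ _i : Fin 3, ((1 + 1/α) * (2*(α*κ)) ^ 2)
          + (1+α) * gradSq n x := by
        simp only [gradSq]
        rw [Finset.mul_sum, ← Finset.sum_add_distrib]
        apply Finset.sum_le_sum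
        intro i _
        have h1 := hDe x hx hnx κ hκ0 hκ i
        have h2 : ‖fderiv ℝ m x (EuclideanSpace.single i (1:ℝ))‖ ^ 2
            ≤ (‖fderiv ℝ n x (EuclideanSpace.single i (1:ℝ))‖ + 2*(α*κ)) ^ 2 :=
          pow_le_pow_left₀ (norm_nonneg _) h1 2
        refine h2.trans ?_
        have := sq_add_helper α (‖fderiv ℝ n x (EuclideanSpace.single i (1:ℝ))‖) (2*(α*κ)) hαpos
        linarith
      rw [Finset.sum_const] at hsum
      simp only [Finset.card_univ, Fintype.card_fin, nsmul_eq_mul] at hsum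
      have hid : α * (1/α) * (α * κ^2) = α * κ^2 := by
        rw [mul_one_div_cancel hαpos.ne', one_mul]
      have h3 : (0:ℝ) ≤ (4 - α) * α * κ^2 :=
        mul_nonneg (mul_nonneg (by linarith) hα0) (sq_nonneg κ)
      have h4 : (3:ℝ) * ((1 + 1/α) * (2*(α*κ)) ^ 2) ≤ 60 * α * κ ^ 2 := by
        nlinarith [hid, h3]
      linarith
    -- pointwise energy estimate
    have hpt : ∀ x : E3,
        ENNReal.ofReal (gradSq m x) ≤ ENNReal.ofReal (1+α) * ENNReal.ofReal (gradSq n x)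
          + (closedBall (0:E3) (2*R0)).indicator (fun _ => ENNReal.ofReal (60*α*K^2)) x := by
      intro x
      by_cases h1 : ‖x‖ < R0
      · have hev : m =ᶠ[𝓝 x] n :=
          Filter.eventuallyEq_of_mem ((isOpen_ball).mem_nhds (mem_ball_zero_iff.mpr h1))
            fun y hy => hmeq y (le_of_lt (mem_ball_zero_iff.mp hy))
        have hgg : gradSq m x = gradSq n x := by
          simp only [gradSq]
          rw [hev.fderiv_eq]
        rw [hgg]
        refine le_trans ?_ le_self_add
        conv_lhs => rw [← one_mul (ENNReal.ofReal (gradSq n x))]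
        exact mul_le_mul_left (ENNReal.one_le_ofReal.mpr (by linarith)) _
      · push_neg at h1
        have hxnot : x ∉ closure G := hout x h1
        have hdx : DifferentiableAt ℝ n x := hdiffn x hxnot
        have hnx : ‖n x‖ = 1 := hunit x fun hxg => hxnot (subset_closure hxg)
        by_cases h2 : ‖x‖ ≤ 2*R0
        · have hmem : x ∈ closedBall (0:E3) (2*R0) := mem_closedBall_zero_iff.mpr h2
          rw [Set.indicator_of_mem hmem]
          have hb := hgrad x hdx hnx K hK0 (hK x)
          calc ENNReal.ofReal (gradSq m x)
              ≤ ENNReal.ofReal ((1+α) * gradSq n x + 60*α*K^2) := ENNReal.ofReal_le_ofReal hb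
            _ ≤ ENNReal.ofReal ((1+α) * gradSq n x) + ENNReal.ofReal (60*α*K^2) :=
                ENNReal.ofReal_add_le
            _ = ENNReal.ofReal (1+α) * ENNReal.ofReal (gradSq n x)
                + ENNReal.ofReal (60*α*K^2) := by
                rw [ENNReal.ofReal_mul (by linarith)]
        · push_neg at h2
          have hb := hgrad x hdx hnx 0 le_rfl (by rw [hdφ0 x h2]; simp)
          refine le_trans ?_ le_self_add
          calc ENNReal.ofReal (gradSq m x)
              ≤ ENNReal.ofReal ((1+α) * gradSq n x + 60*α*0^2) := ENNReal.ofReal_le_ofReal hb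
            _ = ENNReal.ofReal (1+α) * ENNReal.ofReal (gradSq n x) := by
                norm_num
                rw [ENNReal.ofReal_mul (by linarith)]
    -- energy estimate
    have hind_meas : Measurable ((closedBall (0:E3) (2*R0)).indicator
        (fun _ => ENNReal.ofReal (60*α*K^2))) :=
      measurable_const.indicator measurableSet_closedBall
    have hEm : eEnergy Gᶜ m ≤ ENNReal.ofReal (1+α) * eEnergy Gᶜ n
        + ENNReal.ofReal (60*α*K^2) * volume (closedBall (0:E3) (2*R0)) := by
      have hstep1 : eEnergy Gᶜ m ≤ ∫⁻ x in Gᶜ,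
          (ENNReal.ofReal (1+α) * ENNReal.ofReal (gradSq n x)
            + (closedBall (0:E3) (2*R0)).indicator (fun _ => ENNReal.ofReal (60*α*K^2)) x) :=
        lintegral_mono fun x => hpt x
      have hstep2 : (∫⁻ x in Gᶜ,
          (ENNReal.ofReal (1+α) * ENNReal.ofReal (gradSq n x)
            + (closedBall (0:E3) (2*R0)).indicator (fun _ => ENNReal.ofReal (60*α*K^2)) x))
          = ENNReal.ofReal (1+α) * eEnergy Gᶜ n
            + ∫⁻ x in Gᶜ, (closedBall (0:E3) (2*R0)).indicator
                (fun _ => ENNReal.ofReal (60*α*K^2)) x := by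
        rw [lintegral_add_right _ hind_meas, lintegral_const_mul' _ _ ENNReal.ofReal_ne_top]
        rfl
      have hstep3 : (∫⁻ x in Gᶜ, (closedBall (0:E3) (2*R0)).indicator
            (fun _ => ENNReal.ofReal (60*α*K^2)) x)
          ≤ ENNReal.ofReal (60*α*K^2) * volume (closedBall (0:E3) (2*R0)) := by
        calc (∫⁻ x in Gᶜ, (closedBall (0:E3) (2*R0)).indicator
              (fun _ => ENNReal.ofReal (60*α*K^2)) x)
            ≤ ∫⁻ x, (closedBall (0:E3) (2*R0)).indicator
              (fun _ => ENNReal.ofReal (60*α*K^2)) x :=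
              lintegral_mono' Measure.restrict_le_self le_rfl
          _ = ∫⁻ _x in closedBall (0:E3) (2*R0), ENNReal.ofReal (60*α*K^2) :=
              lintegral_indicator measurableSet_closedBall _
          _ = ENNReal.ofReal (60*α*K^2) * volume (closedBall (0:E3) (2*R0)) :=
              setLIntegral_const _ _
      exact hstep1.trans (hstep2 ▸ add_le_add_right hstep3 _)
    have hEmtop : eEnergy Gᶜ m < ⊤ := by
      refine lt_of_le_of_lt hEm ?_
      exact ENNReal.add_lt_top.mpr ⟨ENNReal.mul_lt_top ENNReal.ofReal_lt_top hEn,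
        ENNReal.mul_lt_top ENNReal.ofReal_lt_top measure_closedBall_lt_top⟩
    -- weighted L² estimate
    have hwt : ∀ x ∈ Gᶜ, (‖m x - v‖₊ : ℝ≥0∞) ^ 2 / (1 + (‖x‖₊ : ℝ≥0∞) ^ 2)
        ≤ (‖n x - u‖₊ : ℝ≥0∞) ^ 2 / (1 + (‖x‖₊ : ℝ≥0∞) ^ 2)
          + (ball (0:E3) (2*R0)).indicator (fun _ => 4) x := by
      intro x hxG
      by_cases hx : 2*R0 ≤ ‖x‖
      · have hφx : φ x = 1 := hφ1 x hx
        have hmv : m x - v = rotCLM u e2 α (n x - u) := by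
          rw [hrot x, hφx, mul_one, ← hrotu, ← map_sub]
        have hnorm : ‖m x - v‖₊ = ‖n x - u‖₊ := by
          have := rotCLM_norm hu he2 hue2 α (n x - u)
          rw [← hmv] at this
          ext
          exact this
        rw [hnorm]
        exact le_self_add
      · push_neg at hx
        have hmem : x ∈ ball (0:E3) (2*R0) := mem_ball_zero_iff.mpr hx
        rw [Set.indicator_of_mem hmem]
        have hb : ‖m x - v‖ ≤ 2 := by
          have h5 := norm_sub_le (m x) v
          rw [hmnorm x, hunit x hxG, hv] at h5
          linarith
        have hb2 : (‖m x - v‖₊ : ℝ≥0∞) ^ 2 ≤ 4 := by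
          have h6 : (‖m x - v‖₊ : ℝ≥0∞) ≤ 2 := by
            rw [← enorm_eq_nnnorm, ← ofReal_norm_eq_enorm]
            calc ENNReal.ofReal ‖m x - v‖ ≤ ENNReal.ofReal 2 := ENNReal.ofReal_le_ofReal hb
              _ = 2 := by norm_num
          calc (‖m x - v‖₊ : ℝ≥0∞) ^ 2 ≤ 2 ^ 2 := by gcongr
            _ = 4 := by norm_num
        have hdiv : (‖m x - v‖₊ : ℝ≥0∞) ^ 2 / (1 + (‖x‖₊ : ℝ≥0∞) ^ 2) ≤ 4 := by
          apply ENNReal.div_le_of_le_mul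
          calc (‖m x - v‖₊ : ℝ≥0∞) ^ 2 ≤ 4 := hb2
            _ ≤ 4 * (1 + (‖x‖₊ : ℝ≥0∞) ^ 2) := le_mul_of_one_le_right' le_self_add
        exact hdiv.trans le_add_self
    have hind4 : Measurable ((ball (0:E3) (2*R0)).indicator (fun _ => (4:ℝ≥0∞))) :=
      measurable_const.indicator measurableSet_ball
    have hL2m : (∫⁻ x in Gᶜ, (‖m x - v‖₊ : ℝ≥0∞) ^ 2 / (1 + (‖x‖₊ : ℝ≥0∞) ^ 2)) < ⊤ := by
      have hstep : (∫⁻ x in Gᶜ, (‖m x - v‖₊ : ℝ≥0∞) ^ 2 / (1 + (‖x‖₊ : ℝ≥0∞) ^ 2))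
          ≤ (∫⁻ x in Gᶜ, (‖n x - u‖₊ : ℝ≥0∞) ^ 2 / (1 + (‖x‖₊ : ℝ≥0∞) ^ 2))
            + ∫⁻ x in Gᶜ, (ball (0:E3) (2*R0)).indicator (fun _ => (4:ℝ≥0∞)) x := by
        rw [← lintegral_add_right _ hind4]
        exact setLIntegral_mono' hGopen.measurableSet.compl hwt
      refine lt_of_le_of_lt hstep (ENNReal.add_lt_top.mpr ⟨hL2, ?_⟩)
      calc (∫⁻ x in Gᶜ, (ball (0:E3) (2*R0)).indicator (fun _ => (4:ℝ≥0∞)) x)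
          ≤ ∫⁻ x, (ball (0:E3) (2*R0)).indicator (fun _ => (4:ℝ≥0∞)) x :=
            lintegral_mono' Measure.restrict_le_self le_rfl
        _ = ∫⁻ _x in ball (0:E3) (2*R0), (4:ℝ≥0∞) := lintegral_indicator measurableSet_ball _
        _ = 4 * volume (ball (0:E3) (2*R0)) := setLIntegral_const _ _
        _ < ⊤ := ENNReal.mul_lt_top (by norm_num) measure_ball_lt_top
    -- admissibility of m
    have hadm_m : AdmissibleC G v m := by
      refine ⟨fun x hx => by rw [hmnorm x]; exact hunit x hx, fun x hx => ?_, hL2m, hEmtop⟩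
      exact (hder x (hdiffn x hx)).differentiableAt
    -- trace invariance
    have hFsm : Fs m = Fs n := by
      apply hFs
      intro x hx
      exact hmeq x (le_of_lt (mem_ball_zero_iff.mp (hcl (frontier_subset_closure hx))))
    refine ⟨m, hadm_m, ?_⟩
    -- final energy bound
    have hofadd : ENNReal.ofReal (1+α) = 1 + ENNReal.ofReal α := by
      rw [ENNReal.ofReal_add (by norm_num) hα0]
      norm_num
    have hof60 : ENNReal.ofReal (60*α*K^2) = ENNReal.ofReal α * ENNReal.ofReal (60*K^2) := by
      rw [← ENNReal.ofReal_mul hα0]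
      ring_nf
    have key : energyC G Fs m ≤ energyC G Fs n + ENNReal.ofReal α * (energyC G Fs n + c₀) := by
      show eEnergy Gᶜ m + Fs m ≤ (eEnergy Gᶜ n + Fs n) + _
      rw [hFsm]
      calc eEnergy Gᶜ m + Fs n
          ≤ (ENNReal.ofReal (1+α) * eEnergy Gᶜ n
              + ENNReal.ofReal (60*α*K^2) * volume (closedBall (0:E3) (2*R0))) + Fs n :=
            add_le_add_left hEm _
        _ = (eEnergy Gᶜ n + Fs n)
            + (ENNReal.ofReal α * eEnergy Gᶜ n + ENNReal.ofReal α * c₀) := by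
            rw [hofadd, hof60, hc₀def]
            ring
        _ ≤ (eEnergy Gᶜ n + Fs n)
            + ENNReal.ofReal α * ((eEnergy Gᶜ n + Fs n) + c₀) := by
            rw [mul_add, mul_add]
            gcongr
            exact le_self_add
    refine key.trans ?_
    have ha2 : ENNReal.ofReal α ≤ ENNReal.ofReal ‖u - v‖ * 2 := by
      calc ENNReal.ofReal α ≤ ENNReal.ofReal (‖u - v‖ * 2) :=
            ENNReal.ofReal_le_ofReal (by linarith)
        _ = ENNReal.ofReal ‖u - v‖ * ENNReal.ofReal 2 :=
            ENNReal.ofReal_mul (norm_nonneg _)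
        _ = ENNReal.ofReal ‖u - v‖ * 2 := by norm_num
    have hEc : energyC G Fs n + c₀ ≤ (1 + c₀) * (energyC G Fs n + 1) := by
      have h7 : energyC G Fs n + c₀
          ≤ (energyC G Fs n + 1) + (c₀ * energyC G Fs n + c₀) :=
        add_le_add le_self_add le_add_self
      calc energyC G Fs n + c₀
          ≤ (energyC G Fs n + 1) + (c₀ * energyC G Fs n + c₀) := h7
        _ = (1 + c₀) * (energyC G Fs n + 1) := by ring
    refine add_le_add_right ?_ _
    calc ENNReal.ofReal α * (energyC G Fs n + c₀)
        ≤ (ENNReal.ofReal ‖u - v‖ * 2) * ((1 + c₀) * (energyC G Fs n + 1)) :=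
          mul_le_mul' ha2 hEc
      _ = ENNReal.ofReal ‖u - v‖ * (2 * (1 + c₀)) * (energyC G Fs n + 1) := by ring


/-- **`Ê` is Lipschitz.** The minimal energy `Ê : S² → [0,∞)` is finite and Lipschitz
continuous: `|Ê(n1) − Ê(n2)| ≤ C |n1 − n2|` with `C = C(G, F_s)`. -/
theorem Ehat_lipschitz (G : Set E3) (hG : SmoothBoundedDomain G)
    (Fs : (E3 → E3) → ℝ≥0∞) (hFs : TraceInvariant G Fs)
    (hfin : ∃ n0 : E3, ‖n0‖ = 1 ∧ ∃ n : E3 → E3, AdmissibleC G n0 n ∧ energyC G Fs n ≠ ⊤) :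
    (∀ n0 : E3, ‖n0‖ = 1 → Ehat G Fs n0 ≠ ⊤) ∧
    ∃ C : ℝ, 0 ≤ C ∧ ∀ n1 n2 : E3, ‖n1‖ = 1 → ‖n2‖ = 1 →
      |(Ehat G Fs n1).toReal - (Ehat G Fs n2).toReal| ≤ C * ‖n1 - n2‖ := by
  obtain ⟨c, hc, htr⟩ := transfer G hG Fs hFs
  obtain ⟨ns, hns, n0, hadm0, hE0⟩ := hfin
  have hnorm2 : ∀ w1 w2 : E3, ‖w1‖ = 1 → ‖w2‖ = 1 → ENNReal.ofReal ‖w1 - w2‖ ≤ 2 := by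
    intro w1 w2 h1 h2
    have hb : ‖w1 - w2‖ ≤ 2 := by
      have := norm_sub_le w1 w2
      rw [h1, h2] at this
      linarith
    calc ENNReal.ofReal ‖w1 - w2‖ ≤ ENNReal.ofReal 2 := ENNReal.ofReal_le_ofReal hb
      _ = 2 := by norm_num
  set M : ℝ≥0∞ := energyC G Fs n0 + 2 * c * (energyC G Fs n0 + 1) with hM
  have hMne : M ≠ ⊤ := by
    rw [hM]
    exact ENNReal.add_ne_top.mpr ⟨hE0,
      ENNReal.mul_ne_top (ENNReal.mul_ne_top ENNReal.ofNat_ne_top hc)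
        (ENNReal.add_ne_top.mpr ⟨hE0, ENNReal.one_ne_top⟩)⟩
  have hbound : ∀ w : E3, ‖w‖ = 1 → Ehat G Fs w ≤ M := by
    intro w hw
    obtain ⟨m, hm, hle⟩ := htr ns w hns hw n0 hadm0
    refine le_trans (iInf₂_le m hm) (hle.trans ?_)
    rw [hM]
    exact add_le_add_right
      (mul_le_mul_left (mul_le_mul_left (hnorm2 ns w hns hw) c) _) _
  have hfinite : ∀ w : E3, ‖w‖ = 1 → Ehat G Fs w ≠ ⊤ :=
    fun w hw => ((hbound w hw).trans_lt (lt_top_iff_ne_top.mpr hMne)).ne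
  refine ⟨hfinite, ?_⟩
  set C' : ℝ≥0∞ := c * (M + 2) with hC'
  have hC'ne : C' ≠ ⊤ :=
    ENNReal.mul_ne_top hc (ENNReal.add_ne_top.mpr ⟨hMne, ENNReal.ofNat_ne_top⟩)
  have hkey : ∀ w1 w2 : E3, ‖w1‖ = 1 → ‖w2‖ = 1 →
      Ehat G Fs w2 ≤ Ehat G Fs w1 + ENNReal.ofReal ‖w1 - w2‖ * C' := by
    intro w1 w2 h1 h2
    refine ENNReal.le_of_forall_pos_le_add ?_
    intro ε hε hlt
    set δ : ℝ≥0∞ := min (ε : ℝ≥0∞) 1 with hδ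
    have hδ0 : δ ≠ 0 := by
      have : (0:ℝ≥0∞) < δ := lt_min (by exact_mod_cast hε) zero_lt_one
      exact this.ne'
    have hex : ∃ nn : E3 → E3, AdmissibleC G w1 nn ∧
        energyC G Fs nn < Ehat G Fs w1 + δ := by
      by_contra hcon
      push_neg at hcon
      have hle2 : Ehat G Fs w1 + δ ≤ Ehat G Fs w1 :=
        le_iInf₂ fun nn hn => hcon nn hn
      exact absurd hle2 (not_le.mpr (ENNReal.lt_add_right (hfinite w1 h1) hδ0))
    obtain ⟨nn, hnadm, hnlt⟩ := hex
    obtain ⟨m, hmadm, hmle⟩ := htr w1 w2 h1 h2 nn hnadm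
    have hEn_le : energyC G Fs nn ≤ M + 1 :=
      hnlt.le.trans (add_le_add (hbound w1 h1) (min_le_right _ _))
    calc Ehat G Fs w2 ≤ energyC G Fs m := iInf₂_le m hmadm
      _ ≤ energyC G Fs nn + ENNReal.ofReal ‖w1 - w2‖ * c * (energyC G Fs nn + 1) := hmle
      _ ≤ (Ehat G Fs w1 + δ) + ENNReal.ofReal ‖w1 - w2‖ * c * ((M + 1) + 1) := by
          gcongr <;> first | exact hnlt.le | exact hEn_le
      _ = (Ehat G Fs w1 + ENNReal.ofReal ‖w1 - w2‖ * C') + δ := by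
          rw [hC']
          ring
      _ ≤ Ehat G Fs w1 + ENNReal.ofReal ‖w1 - w2‖ * C' + ε := by
          gcongr
          exact min_le_left _ _
  refine ⟨C'.toReal, ENNReal.toReal_nonneg, ?_⟩
  intro n1 n2 h1 h2
  have hA := hkey n1 n2 h1 h2
  have hB := hkey n2 n1 h2 h1
  have hf1 := hfinite n1 h1
  have hf2 := hfinite n2 h2
  have hmulne : ∀ w1 w2 : E3, ENNReal.ofReal ‖w1 - w2‖ * C' ≠ ⊤ :=
    fun w1 w2 => ENNReal.mul_ne_top ENNReal.ofReal_ne_top hC'ne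
  have htA : (Ehat G Fs n2).toReal ≤ (Ehat G Fs n1).toReal + C'.toReal * ‖n1 - n2‖ := by
    have h := ENNReal.toReal_mono (ENNReal.add_ne_top.mpr ⟨hf1, hmulne n1 n2⟩) hA
    rw [ENNReal.toReal_add hf1 (hmulne n1 n2), ENNReal.toReal_mul,
      ENNReal.toReal_ofReal (norm_nonneg _)] at h
    nlinarith [h]
  have htB : (Ehat G Fs n1).toReal ≤ (Ehat G Fs n2).toReal + C'.toReal * ‖n1 - n2‖ := by
    have h := ENNReal.toReal_mono (ENNReal.add_ne_top.mpr ⟨hf2, hmulne n2 n1⟩) hB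
    rw [ENNReal.toReal_add hf2 (hmulne n2 n1), ENNReal.toReal_mul,
      ENNReal.toReal_ofReal (norm_nonneg _), norm_sub_rev] at h
    nlinarith [h]
  rw [abs_sub_le_iff]
  constructor <;> linarith

end
end

section
/- For all n1, n2 ∈ S² and every λ > 0, the minimal colloid energies satisfy Ê(n1) ≤ (1 + λ) Ê(n2) + C (1 + λ^{−1}) |n1 − n2|², where C depends only on G (through a fixed cutoff function) and not on n1, n2, λ. -/
open MeasureTheory Filter Metric Real Asymptotics
open scoped ENNReal NNReal Topology

noncomputable section

section Aux

open scoped RealInnerProductSpace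

def Pmap (u v : E3) : E3 →L[ℝ] E3 :=
  (innerSL ℝ u).smulRight u + (innerSL ℝ v).smulRight v

def Qmap (u v : E3) : E3 →L[ℝ] E3 :=
  (innerSL ℝ u).smulRight v - (innerSL ℝ v).smulRight u

lemma Pmap_apply (u v y : E3) : Pmap u v y = ⟪u, y⟫ • u + ⟪v, y⟫ • v := by simp [Pmap]
lemma Qmap_apply (u v y : E3) : Qmap u v y = ⟪u, y⟫ • v - ⟪v, y⟫ • u := by simp [Qmap]

lemma expand_sq {u v : E3} (hu : ‖u‖ = 1) (hv : ‖v‖ = 1) (huv : ⟪u, v⟫ = 0)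
    (y : E3) (α β : ℝ) :
    ‖y + α • u + β • v‖ ^ 2
      = ‖y‖ ^ 2 + α ^ 2 + β ^ 2 + 2 * α * ⟪u, y⟫ + 2 * β * ⟪v, y⟫ := by
  rw [norm_add_sq_real, norm_add_sq_real]
  simp only [inner_add_left, real_inner_smul_left, real_inner_smul_right, norm_smul,
    Real.norm_eq_abs, real_inner_comm y u, real_inner_comm y v, huv, hu, hv, mul_pow, sq_abs]
  ring

lemma bessel_pair {u v : E3} (hu : ‖u‖ = 1) (hv : ‖v‖ = 1) (huv : ⟪u, v⟫ = 0) (y : E3) :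
    ⟪u, y⟫ ^ 2 + ⟪v, y⟫ ^ 2 ≤ ‖y‖ ^ 2 := by
  have h := expand_sq hu hv huv y (-⟪u, y⟫) (-⟪v, y⟫)
  nlinarith [sq_nonneg ‖y + -⟪u, y⟫ • u + -⟪v, y⟫ • v‖]

lemma rot_decomp (u v y : E3) (c s : ℝ) :
    y + (c - 1) • Pmap u v y + s • Qmap u v y
      = y + ((c - 1) * ⟪u, y⟫ - s * ⟪v, y⟫) • u + ((c - 1) * ⟪v, y⟫ + s * ⟪u, y⟫) • v := by
  rw [Pmap_apply, Qmap_apply]; module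

lemma rot_norm {u v : E3} (hu : ‖u‖ = 1) (hv : ‖v‖ = 1) (huv : ⟪u, v⟫ = 0)
    {c s : ℝ} (hcs : c ^ 2 + s ^ 2 = 1) (y : E3) :
    ‖y + (c - 1) • Pmap u v y + s • Qmap u v y‖ = ‖y‖ := by
  have h : ‖y + (c - 1) • Pmap u v y + s • Qmap u v y‖ ^ 2 = ‖y‖ ^ 2 := by
    rw [rot_decomp, expand_sq hu hv huv]
    nlinarith [sq_nonneg ⟪u, y⟫, sq_nonneg ⟪v, y⟫]
  calc ‖y + (c - 1) • Pmap u v y + s • Qmap u v y‖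
      = √(‖y + (c - 1) • Pmap u v y + s • Qmap u v y‖ ^ 2) := (Real.sqrt_sq (norm_nonneg _)).symm
    _ = ‖y‖ := by rw [h, Real.sqrt_sq (norm_nonneg _)]

lemma tangent_decomp (u v y : E3) (c s : ℝ) :
    (-s) • Pmap u v y + c • Qmap u v y
      = (0 : E3) + (-s * ⟪u, y⟫ - c * ⟪v, y⟫) • u + (-s * ⟪v, y⟫ + c * ⟪u, y⟫) • v := by
  rw [Pmap_apply, Qmap_apply]; module

lemma tangent_bound {u v : E3} (hu : ‖u‖ = 1) (hv : ‖v‖ = 1) (huv : ⟪u, v⟫ = 0)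
    {c s : ℝ} (hcs : c ^ 2 + s ^ 2 = 1) (y : E3) :
    ‖(-s) • Pmap u v y + c • Qmap u v y‖ ≤ ‖y‖ := by
  have h : ‖(-s) • Pmap u v y + c • Qmap u v y‖ ^ 2 ≤ ‖y‖ ^ 2 := by
    rw [tangent_decomp, expand_sq hu hv huv]
    have hb := bessel_pair hu hv huv y
    simp only [inner_zero_right, norm_zero]
    nlinarith [sq_nonneg ⟪u, y⟫, sq_nonneg ⟪v, y⟫]
  calc ‖(-s) • Pmap u v y + c • Qmap u v y‖
      = √(‖(-s) • Pmap u v y + c • Qmap u v y‖ ^ 2) := (Real.sqrt_sq (norm_nonneg _)).symm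
    _ ≤ √(‖y‖ ^ 2) := Real.sqrt_le_sqrt h
    _ = ‖y‖ := Real.sqrt_sq (norm_nonneg _)

def cutoff : E3 → ℝ := fun x => Real.smoothTransition (‖x‖ ^ 2 - 2)

lemma cutoff_contDiff : ContDiff ℝ (⊤ : ℕ∞) cutoff :=
  Real.smoothTransition.contDiff.comp ((contDiff_norm_sq ℝ).sub contDiff_const)

lemma cutoff_diff : Differentiable ℝ cutoff := cutoff_contDiff.differentiable (by norm_num)

lemma cutoff_eq_zero {x : E3} (h : ‖x‖ ^ 2 ≤ 2) : cutoff x = 0 :=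
  Real.smoothTransition.zero_of_nonpos (by simp [cutoff]; linarith)

lemma cutoff_eq_one {x : E3} (h : 3 ≤ ‖x‖ ^ 2) : cutoff x = 1 :=
  Real.smoothTransition.one_of_one_le (by linarith)

def Kfun (x : E3) : ℝ := ∑ i : Fin 3, (fderiv ℝ cutoff x (EuclideanSpace.single i (1 : ℝ))) ^ 2

lemma Kfun_nonneg (x : E3) : 0 ≤ Kfun x := Finset.sum_nonneg fun _ _ => sq_nonneg _

lemma Kfun_continuous : Continuous Kfun := by
  have h : Continuous (fderiv ℝ cutoff) := cutoff_contDiff.continuous_fderiv (by norm_num)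
  exact continuous_finset_sum _ fun i _ => ((h.clm_apply continuous_const).pow 2)

lemma Kfun_zero_far {x : E3} (h : 3 < ‖x‖ ^ 2) : Kfun x = 0 := by
  have hopen : IsOpen {y : E3 | 3 < ‖y‖ ^ 2} := isOpen_lt continuous_const (continuous_norm.pow 2)
  have hev : cutoff =ᶠ[𝓝 x] (fun _ => (1 : ℝ)) := by
    filter_upwards [hopen.mem_nhds h] with y hy
    exact cutoff_eq_one hy.le
  have h2 : fderiv ℝ cutoff x = fderiv ℝ (fun _ : E3 => (1 : ℝ)) x := hev.fderiv_eq
  rw [Kfun]; simp [h2]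

lemma Kfun_hasCompactSupport : HasCompactSupport Kfun := by
  apply HasCompactSupport.intro (isCompact_closedBall (0 : E3) 2)
  intro x hx
  apply Kfun_zero_far
  have : (2 : ℝ) < ‖x‖ := by simpa [dist_eq_norm] using hx
  nlinarith

lemma Kfun_lintegral_lt_top : (∫⁻ x : E3, ENNReal.ofReal (Kfun x)) < ⊤ :=
  (Kfun_continuous.integrable_of_hasCompactSupport Kfun_hasCompactSupport).lintegral_lt_top

lemma measurable_gradSq (f : E3 → E3) : Measurable (gradSq f) := by
  apply Finset.measurable_sum
  intro i _
  exact ((measurable_fderiv_apply_const ℝ f _).norm).pow_const 2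

set_option maxHeartbeats 2000000 in
lemma key_construction (G : Set E3) (hGopen : IsOpen G) (hG1 : G ⊆ Metric.ball (0 : E3) 1)
    (Fs : (E3 → E3) → ℝ≥0∞) (hFs : TraceInvariant G Fs)
    {u v n1 : E3} (hu : ‖u‖ = 1) (hv : ‖v‖ = 1) (huv : ⟪u, v⟫ = 0)
    {θ : ℝ} (hθ0 : 0 ≤ θ)
    (hrep : n1 = Real.cos θ • u + Real.sin θ • v)
    {lam : ℝ} (hlam : 0 < lam)
    (n : E3 → E3) (hn : AdmissibleC G u n) :
    Ehat G Fs n1 ≤ ENNReal.ofReal (1 + lam) * energyC G Fs n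
      + ENNReal.ofReal ((1 + lam⁻¹) * θ ^ 2) * ∫⁻ x : E3, ENNReal.ofReal (Kfun x) := by
  obtain ⟨hunit, hdiff, hweight, henergy⟩ := hn
  set m : E3 → E3 := fun x =>
    n x + (Real.cos (θ * cutoff x) - 1) • Pmap u v (n x)
        + Real.sin (θ * cutoff x) • Qmap u v (n x) with hm
  have hcs : ∀ t : ℝ, Real.cos t ^ 2 + Real.sin t ^ 2 = 1 := fun t => Real.cos_sq_add_sin_sq t
  have hclos : closure G ⊆ Metric.closedBall (0 : E3) 1 := by
    calc closure G ⊆ closure (Metric.ball (0 : E3) 1) := closure_mono hG1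
      _ = Metric.closedBall (0 : E3) 1 := closure_ball 0 one_ne_zero
  have hsmall : ∀ x : E3, x ∈ closure G → ‖x‖ ^ 2 < 2 := by
    intro x hx
    have h1 : ‖x‖ ≤ 1 := by simpa [dist_eq_norm] using hclos hx
    nlinarith [norm_nonneg x]
  have hmn : ∀ x : E3, ‖x‖ ^ 2 < 2 → m x = n x := by
    intro x hx
    simp [hm, cutoff_eq_zero hx.le]
  have hU2 : IsOpen {y : E3 | ‖y‖ ^ 2 < 2} := isOpen_lt (continuous_norm.pow 2) continuous_const
  have hev : ∀ x : E3, ‖x‖ ^ 2 < 2 → m =ᶠ[nhds x] n := by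
    intro x hx
    filter_upwards [hU2.mem_nhds hx] with y hy
    exact hmn y hy
  have htrace : Fs m = Fs n :=
    hFs m n fun x hx => hmn x (hsmall x (frontier_subset_closure (s := G) hx))
  have hmunit : UnitValuedOn m Gᶜ := by
    intro x hx
    rw [hm]
    exact (rot_norm hu hv huv (hcs (θ * cutoff x)) (n x)).trans (hunit x hx)
  have hDm : ∀ x : E3, DifferentiableAt ℝ n x →
      HasFDerivAt m (fderiv ℝ n x
        + ((Real.cos (θ * cutoff x) - 1) • ((Pmap u v).comp (fderiv ℝ n x))
           + ((-Real.sin (θ * cutoff x)) • (θ • fderiv ℝ cutoff x)).smulRight (Pmap u v (n x)))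
        + (Real.sin (θ * cutoff x) • ((Qmap u v).comp (fderiv ℝ n x))
           + (Real.cos (θ * cutoff x) • (θ • fderiv ℝ cutoff x)).smulRight (Qmap u v (n x)))) x := by
    intro x hnx
    have hg : HasFDerivAt (fun y : E3 => θ * cutoff y) (θ • fderiv ℝ cutoff x) x :=
      (cutoff_diff x).hasFDerivAt.const_mul θ
    have hcos := (Real.hasDerivAt_cos (θ * cutoff x)).comp_hasFDerivAt x hg
    have hsin := (Real.hasDerivAt_sin (θ * cutoff x)).comp_hasFDerivAt x hg
    have hP : HasFDerivAt (fun y : E3 => Pmap u v (n y)) ((Pmap u v).comp (fderiv ℝ n x)) x :=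
      (Pmap u v).hasFDerivAt.comp x hnx.hasFDerivAt
    have hQ : HasFDerivAt (fun y : E3 => Qmap u v (n y)) ((Qmap u v).comp (fderiv ℝ n x)) x :=
      (Qmap u v).hasFDerivAt.comp x hnx.hasFDerivAt
    exact (hnx.hasFDerivAt.add ((hcos.sub_const 1).smul hP)).add (hsin.smul hQ)
  have hperdir : ∀ x : E3, x ∉ closure G → ∀ e : E3,
      ‖fderiv ℝ m x e‖ ^ 2 ≤ (1 + lam) * ‖fderiv ℝ n x e‖ ^ 2
        + (1 + lam⁻¹) * θ ^ 2 * (fderiv ℝ cutoff x e) ^ 2 := by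
    intro x hx e
    have hxG : x ∈ Gᶜ := fun hxg => hx (subset_closure hxg)
    have hnx := hdiff x hx
    rw [(hDm x hnx).fderiv]
    have happ : (fderiv ℝ n x
        + ((Real.cos (θ * cutoff x) - 1) • ((Pmap u v).comp (fderiv ℝ n x))
           + ((-Real.sin (θ * cutoff x)) • (θ • fderiv ℝ cutoff x)).smulRight (Pmap u v (n x)))
        + (Real.sin (θ * cutoff x) • ((Qmap u v).comp (fderiv ℝ n x))
           + (Real.cos (θ * cutoff x) • (θ • fderiv ℝ cutoff x)).smulRight (Qmap u v (n x)))) e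
      = (fderiv ℝ n x e + (Real.cos (θ * cutoff x) - 1) • Pmap u v (fderiv ℝ n x e)
          + Real.sin (θ * cutoff x) • Qmap u v (fderiv ℝ n x e))
        + (θ * fderiv ℝ cutoff x e) • ((-Real.sin (θ * cutoff x)) • Pmap u v (n x)
          + Real.cos (θ * cutoff x) • Qmap u v (n x)) := by
      simp only [ContinuousLinearMap.add_apply, ContinuousLinearMap.coe_smul',
        Pi.smul_apply, ContinuousLinearMap.smulRight_apply, ContinuousLinearMap.coe_comp',
        Function.comp_apply, ContinuousLinearMap.smul_apply, smul_eq_mul]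
      module
    rw [happ]
    set A := fderiv ℝ n x e + (Real.cos (θ * cutoff x) - 1) • Pmap u v (fderiv ℝ n x e)
          + Real.sin (θ * cutoff x) • Qmap u v (fderiv ℝ n x e) with hA
    set B := (θ * fderiv ℝ cutoff x e) • ((-Real.sin (θ * cutoff x)) • Pmap u v (n x)
          + Real.cos (θ * cutoff x) • Qmap u v (n x)) with hB
    have hAn : ‖A‖ = ‖fderiv ℝ n x e‖ := rot_norm hu hv huv (hcs (θ * cutoff x)) _
    have hBn : ‖B‖ ≤ θ * |fderiv ℝ cutoff x e| := by
      rw [hB, norm_smul]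
      have h1 : ‖(-Real.sin (θ * cutoff x)) • Pmap u v (n x)
          + Real.cos (θ * cutoff x) • Qmap u v (n x)‖ ≤ ‖n x‖ :=
        tangent_bound hu hv huv (hcs (θ * cutoff x)) (n x)
      rw [hunit x hxG] at h1
      calc ‖θ * fderiv ℝ cutoff x e‖ * ‖(-Real.sin (θ * cutoff x)) • Pmap u v (n x)
            + Real.cos (θ * cutoff x) • Qmap u v (n x)‖
          ≤ ‖θ * fderiv ℝ cutoff x e‖ * 1 := by
            exact mul_le_mul_of_nonneg_left h1 (norm_nonneg _)
        _ = θ * |fderiv ℝ cutoff x e| := by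
            rw [mul_one, Real.norm_eq_abs, abs_mul, abs_of_nonneg hθ0]
    have htri : ‖A + B‖ ≤ ‖fderiv ℝ n x e‖ + θ * |fderiv ℝ cutoff x e| := by
      calc ‖A + B‖ ≤ ‖A‖ + ‖B‖ := norm_add_le _ _
        _ ≤ _ := by rw [hAn]; exact add_le_add_right hBn _
    have hsq : ‖A + B‖ ^ 2 ≤ (‖fderiv ℝ n x e‖ + θ * |fderiv ℝ cutoff x e|) ^ 2 := by
      apply pow_le_pow_left₀ (norm_nonneg _) htri
    have hb2 : (θ * |fderiv ℝ cutoff x e|) ^ 2 = θ ^ 2 * (fderiv ℝ cutoff x e) ^ 2 := by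
      rw [mul_pow, sq_abs]
    set a := ‖fderiv ℝ n x e‖
    set b := θ * |fderiv ℝ cutoff x e|
    have hY : (a + b) ^ 2 ≤ (1 + lam) * a ^ 2 + (1 + lam⁻¹) * b ^ 2 := by
      have hinv : lam * lam⁻¹ = 1 := mul_inv_cancel₀ hlam.ne'
      nlinarith [mul_nonneg (inv_pos.2 hlam).le (sq_nonneg (lam * a - b)), sq_nonneg (a - b),
        sq_nonneg (a + b)]
    calc ‖A + B‖ ^ 2 ≤ (a + b) ^ 2 := hsq
      _ ≤ (1 + lam) * a ^ 2 + (1 + lam⁻¹) * b ^ 2 := hY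
      _ = (1 + lam) * a ^ 2 + (1 + lam⁻¹) * θ ^ 2 * (fderiv ℝ cutoff x e) ^ 2 := by
          rw [hb2]; ring
  have hgradn_nonneg : ∀ x : E3, 0 ≤ gradSq n x :=
    fun x => Finset.sum_nonneg fun _ _ => sq_nonneg _
  have hgrad : ∀ x ∈ Gᶜ, ENNReal.ofReal (gradSq m x)
      ≤ ENNReal.ofReal ((1 + lam) * gradSq n x)
        + ENNReal.ofReal ((1 + lam⁻¹) * θ ^ 2 * Kfun x) := by
    intro x hx
    by_cases hx2 : ‖x‖ ^ 2 < 2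
    · have hfe : fderiv ℝ m x = fderiv ℝ n x := (hev x hx2).fderiv_eq
      have hgg : gradSq m x = gradSq n x := by unfold gradSq; rw [hfe]
      rw [hgg]
      refine le_trans (ENNReal.ofReal_le_ofReal ?_) (le_add_right le_rfl)
      nlinarith [hgradn_nonneg x]
    · have hxc : x ∉ closure G := fun hc => hx2 (hsmall x hc)
      have hsum : gradSq m x ≤ (1 + lam) * gradSq n x + (1 + lam⁻¹) * θ ^ 2 * Kfun x := by
        unfold gradSq Kfun
        rw [Finset.mul_sum, Finset.mul_sum, ← Finset.sum_add_distrib]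
        exact Finset.sum_le_sum fun i _ => hperdir x hxc (EuclideanSpace.single i 1)
      calc ENNReal.ofReal (gradSq m x)
          ≤ ENNReal.ofReal ((1 + lam) * gradSq n x + (1 + lam⁻¹) * θ ^ 2 * Kfun x) :=
            ENNReal.ofReal_le_ofReal hsum
        _ = _ := by
            rw [ENNReal.ofReal_add (mul_nonneg (by positivity) (hgradn_nonneg x))
              (mul_nonneg (by positivity) (Kfun_nonneg x))]
  have henergym : eEnergy Gᶜ m ≤ ENNReal.ofReal (1 + lam) * eEnergy Gᶜ n
      + ENNReal.ofReal ((1 + lam⁻¹) * θ ^ 2) * ∫⁻ x : E3, ENNReal.ofReal (Kfun x) := by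
    have hmeas1 : Measurable fun x : E3 => ENNReal.ofReal ((1 + lam) * gradSq n x) :=
      (measurable_const.mul (measurable_gradSq n)).ennreal_ofReal
    calc eEnergy Gᶜ m
        ≤ ∫⁻ x in Gᶜ, (ENNReal.ofReal ((1 + lam) * gradSq n x)
            + ENNReal.ofReal ((1 + lam⁻¹) * θ ^ 2 * Kfun x)) :=
          setLIntegral_mono' hGopen.measurableSet.compl hgrad
      _ = (∫⁻ x in Gᶜ, ENNReal.ofReal ((1 + lam) * gradSq n x))
            + ∫⁻ x in Gᶜ, ENNReal.ofReal ((1 + lam⁻¹) * θ ^ 2 * Kfun x) :=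
          lintegral_add_left hmeas1 _
      _ ≤ ENNReal.ofReal (1 + lam) * eEnergy Gᶜ n
            + ENNReal.ofReal ((1 + lam⁻¹) * θ ^ 2) * ∫⁻ x : E3, ENNReal.ofReal (Kfun x) := by
          gcongr
          · have h1 : ∀ x : E3, ENNReal.ofReal ((1 + lam) * gradSq n x)
                = ENNReal.ofReal (1 + lam) * ENNReal.ofReal (gradSq n x) := fun x =>
              ENNReal.ofReal_mul (by positivity)
            simp only [h1]
            rw [lintegral_const_mul' _ _ ENNReal.ofReal_ne_top]
            exact le_rfl
          · have h2 : ∀ x : E3, ENNReal.ofReal ((1 + lam⁻¹) * θ ^ 2 * Kfun x)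
                = ENNReal.ofReal ((1 + lam⁻¹) * θ ^ 2) * ENNReal.ofReal (Kfun x) := fun x =>
              ENNReal.ofReal_mul (by positivity)
            simp only [h2]
            rw [lintegral_const_mul' _ _ ENNReal.ofReal_ne_top]
            exact mul_le_mul_right (setLIntegral_le_lintegral _ _) _
  have hn1 : ‖n1‖ = 1 := by
    have h := expand_sq hu hv huv 0 (Real.cos θ) (Real.sin θ)
    have h2 : ‖n1‖ ^ 2 = 1 := by
      rw [hrep]
      have h3 : Real.cos θ • u + Real.sin θ • v = 0 + Real.cos θ • u + Real.sin θ • v := by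
        rw [zero_add]
      rw [h3, h]
      simp [hcs θ]
    nlinarith [norm_nonneg n1]
  have hn1rot : n1 = u + (Real.cos θ - 1) • Pmap u v u + Real.sin θ • Qmap u v u := by
    have huu : (inner ℝ u u : ℝ) = 1 := by
      rw [real_inner_self_eq_norm_sq, hu]; norm_num
    have hvu : (inner ℝ v u : ℝ) = 0 := by rw [real_inner_comm]; exact huv
    rw [hrep, Pmap_apply, Qmap_apply, huu, hvu]
    module
  have hweightm : (∫⁻ x in Gᶜ, (‖m x - n1‖₊ : ℝ≥0∞) ^ 2 / (1 + (‖x‖₊ : ℝ≥0∞) ^ 2)) < ⊤ := by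
    have hopen3 : IsOpen {y : E3 | ‖y‖ ^ 2 < 3} :=
      isOpen_lt (continuous_norm.pow 2) continuous_const
    have hptw : ∀ x ∈ Gᶜ, (‖m x - n1‖₊ : ℝ≥0∞) ^ 2 / (1 + (‖x‖₊ : ℝ≥0∞) ^ 2)
        ≤ ({y : E3 | ‖y‖ ^ 2 < 3}.indicator (fun _ => (4 : ℝ≥0∞)) x)
          + 4 * ((‖n x - u‖₊ : ℝ≥0∞) ^ 2 / (1 + (‖x‖₊ : ℝ≥0∞) ^ 2)) := by
      intro x hx
      by_cases h3 : ‖x‖ ^ 2 < 3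
      · have hb : ‖m x - n1‖ ≤ 2 := by
          calc ‖m x - n1‖ ≤ ‖m x‖ + ‖n1‖ := norm_sub_le _ _
            _ = 2 := by rw [hmunit x hx, hn1]; norm_num
        have hb2 : ‖m x - n1‖₊ ≤ (2 : ℝ≥0) := by
          rw [← NNReal.coe_le_coe]; simpa using hb
        have hb' : (‖m x - n1‖₊ : ℝ≥0∞) ≤ 2 := by exact_mod_cast hb2
        have hind : ({y : E3 | ‖y‖ ^ 2 < 3}.indicator (fun _ => (4 : ℝ≥0∞)) x) = 4 :=
          Set.indicator_of_mem (show x ∈ {y : E3 | ‖y‖ ^ 2 < 3} from h3) _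
        calc (‖m x - n1‖₊ : ℝ≥0∞) ^ 2 / (1 + (‖x‖₊ : ℝ≥0∞) ^ 2)
            ≤ (‖m x - n1‖₊ : ℝ≥0∞) ^ 2 / 1 := by
              gcongr
              exact le_self_add
          _ = (‖m x - n1‖₊ : ℝ≥0∞) ^ 2 := by simp
          _ ≤ 2 ^ 2 := by gcongr
          _ = 4 := by norm_num
          _ ≤ _ := by rw [hind]; exact le_add_right le_rfl
      · have hc1 : cutoff x = 1 := cutoff_eq_one (not_lt.mp h3)
        have hkey : m x - n1 = (n x - u) + (Real.cos θ - 1) • Pmap u v (n x - u)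
            + Real.sin θ • Qmap u v (n x - u) := by
          rw [hm]
          simp only [hc1, mul_one]
          rw [hn1rot, map_sub, map_sub]
          module
        have hnorm : ‖m x - n1‖ = ‖n x - u‖ := by
          rw [hkey]; exact rot_norm hu hv huv (hcs θ) _
        have hnn : ‖m x - n1‖₊ = ‖n x - u‖₊ := NNReal.coe_injective (by simpa using hnorm)
        rw [hnn]
        calc (‖n x - u‖₊ : ℝ≥0∞) ^ 2 / (1 + (‖x‖₊ : ℝ≥0∞) ^ 2)
            ≤ 4 * ((‖n x - u‖₊ : ℝ≥0∞) ^ 2 / (1 + (‖x‖₊ : ℝ≥0∞) ^ 2)) :=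
              le_mul_of_one_le_left' (by norm_num)
          _ ≤ _ := le_add_left le_rfl
    have hmeasind : Measurable ({y : E3 | ‖y‖ ^ 2 < 3}.indicator (fun _ => (4 : ℝ≥0∞))) :=
      measurable_const.indicator hopen3.measurableSet
    calc (∫⁻ x in Gᶜ, (‖m x - n1‖₊ : ℝ≥0∞) ^ 2 / (1 + (‖x‖₊ : ℝ≥0∞) ^ 2))
        ≤ ∫⁻ x in Gᶜ, (({y : E3 | ‖y‖ ^ 2 < 3}.indicator (fun _ => (4 : ℝ≥0∞)) x)
            + 4 * ((‖n x - u‖₊ : ℝ≥0∞) ^ 2 / (1 + (‖x‖₊ : ℝ≥0∞) ^ 2))) :=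
          setLIntegral_mono' hGopen.measurableSet.compl hptw
      _ = (∫⁻ x in Gᶜ, ({y : E3 | ‖y‖ ^ 2 < 3}.indicator (fun _ => (4 : ℝ≥0∞)) x))
            + ∫⁻ x in Gᶜ, 4 * ((‖n x - u‖₊ : ℝ≥0∞) ^ 2 / (1 + (‖x‖₊ : ℝ≥0∞) ^ 2)) :=
          lintegral_add_left hmeasind _
      _ < ⊤ := by
          apply ENNReal.add_lt_top.2
          constructor
          · calc (∫⁻ x in Gᶜ, ({y : E3 | ‖y‖ ^ 2 < 3}.indicator (fun _ => (4 : ℝ≥0∞)) x))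
                ≤ ∫⁻ x : E3, ({y : E3 | ‖y‖ ^ 2 < 3}.indicator (fun _ => (4 : ℝ≥0∞)) x) :=
                  setLIntegral_le_lintegral _ _
              _ = 4 * volume {y : E3 | ‖y‖ ^ 2 < 3} := by
                  rw [lintegral_indicator hopen3.measurableSet]
                  simp
              _ ≤ 4 * volume (Metric.ball (0 : E3) 2) := by
                  gcongr
                  intro y hy
                  simp only [Set.mem_setOf_eq] at hy
                  simp only [Metric.mem_ball, dist_eq_norm, sub_zero]
                  nlinarith [norm_nonneg y]
              _ < ⊤ := ENNReal.mul_lt_top ENNReal.ofNat_lt_top measure_ball_lt_top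
          · rw [lintegral_const_mul' _ _ (by norm_num : (4 : ℝ≥0∞) ≠ ⊤)]
            exact ENNReal.mul_lt_top (by norm_num) hweight
  have hadm : AdmissibleC G n1 m := by
    refine ⟨hmunit, fun x hx => (hDm x (hdiff x hx)).differentiableAt, hweightm, ?_⟩
    calc eEnergy Gᶜ m ≤ _ := henergym
      _ < ⊤ := by
        apply ENNReal.add_lt_top.2
        exact ⟨ENNReal.mul_lt_top ENNReal.ofReal_lt_top henergy,
          ENNReal.mul_lt_top ENNReal.ofReal_lt_top Kfun_lintegral_lt_top⟩
  calc Ehat G Fs n1 ≤ energyC G Fs m := iInf_le_of_le m (iInf_le _ hadm)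
    _ = eEnergy Gᶜ m + Fs n := by rw [energyC, htrace]
    _ ≤ (ENNReal.ofReal (1 + lam) * eEnergy Gᶜ n
          + ENNReal.ofReal ((1 + lam⁻¹) * θ ^ 2) * ∫⁻ x : E3, ENNReal.ofReal (Kfun x)) + Fs n :=
        add_le_add_left henergym _
    _ ≤ ENNReal.ofReal (1 + lam) * energyC G Fs n
          + ENNReal.ofReal ((1 + lam⁻¹) * θ ^ 2) * ∫⁻ x : E3, ENNReal.ofReal (Kfun x) := by
        rw [energyC, mul_add, add_right_comm]
        refine add_le_add_left (add_le_add_right ?_ _) _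
        exact le_mul_of_one_le_left' (by
          rw [ENNReal.one_le_ofReal]; linarith)


end Aux

section MainAux
open scoped RealInnerProductSpace

lemma exists_ortho (n2 : E3) : ∃ w : E3, w ≠ 0 ∧ ⟪n2, w⟫ = 0 := by
  set e0 : E3 := EuclideanSpace.single 0 (1 : ℝ) with he0
  set e1 : E3 := EuclideanSpace.single 1 (1 : ℝ) with he1
  set a0 : ℝ := ⟪n2, e0⟫ with ha0
  set a1 : ℝ := ⟪n2, e1⟫ with ha1
  by_cases h0 : a0 = 0
  · refine ⟨e0, ?_, by rw [← ha0]; exact h0⟩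
    intro h
    have : ‖e0‖ = 1 := by
      rw [he0, EuclideanSpace.norm_single]; norm_num
    rw [h] at this; simp at this
  · refine ⟨a1 • e0 - a0 • e1, ?_, ?_⟩
    · intro h
      have h2 : ⟪e1, a1 • e0 - a0 • e1⟫ = -a0 := by
        rw [inner_sub_right, real_inner_smul_right, real_inner_smul_right]
        have h01 : ⟪e1, e0⟫ = 0 := by
          rw [he0, he1]
          simp [EuclideanSpace.inner_single_left, EuclideanSpace.single_apply]
        have h11 : ⟪e1, e1⟫ = 1 := by
          rw [he1]
          simp [EuclideanSpace.inner_single_left, EuclideanSpace.single_apply]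
        rw [h01, h11]; ring
      rw [h, inner_zero_right] at h2
      exact h0 (by linarith)
    · rw [inner_sub_right, real_inner_smul_right, real_inner_smul_right, ← ha0, ← ha1]
      ring

lemma exists_unit_ortho_rep (n1 n2 : E3) (h1 : ‖n1‖ = 1) (h2 : ‖n2‖ = 1) :
    ∃ v : E3, ‖v‖ = 1 ∧ ⟪n2, v⟫ = 0 ∧
      n1 = Real.cos (Real.arccos ⟪n1, n2⟫) • n2 + Real.sin (Real.arccos ⟪n1, n2⟫) • v := by
  set c : ℝ := ⟪n1, n2⟫ with hc
  have hcabs : |c| ≤ 1 := by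
    have h := abs_real_inner_le_norm n1 n2
    rw [h1, h2] at h; simpa using h
  have hc1 : -1 ≤ c := (abs_le.1 hcabs).1
  have hc2 : c ≤ 1 := (abs_le.1 hcabs).2
  have hcos : Real.cos (Real.arccos c) = c := Real.cos_arccos hc1 hc2
  have hsin : Real.sin (Real.arccos c) = √(1 - c ^ 2) := Real.sin_arccos c
  have hnormsub : ‖n1 - c • n2‖ ^ 2 = 1 - c ^ 2 := by
    rw [norm_sub_sq_real, real_inner_smul_right, norm_smul, h1, h2, ← hc, Real.norm_eq_abs]
    simp only [mul_one, sq_abs, one_pow]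
    ring
  by_cases hs : √(1 - c ^ 2) = 0
  · obtain ⟨w, hw0, hwo⟩ := exists_ortho n2
    refine ⟨‖w‖⁻¹ • w, ?_, ?_, ?_⟩
    · rw [norm_smul, norm_inv, norm_norm, inv_mul_cancel₀ (norm_ne_zero_iff.2 hw0)]
    · rw [real_inner_smul_right, hwo, mul_zero]
    · have hle : 1 - c ^ 2 ≤ 0 := by
        by_contra hlt
        push_neg at hlt
        exact (Real.sqrt_pos.2 hlt).ne' hs
      have hceq : c ^ 2 = 1 := by nlinarith [sq_abs c, abs_nonneg c]
      have hzero : ‖n1 - c • n2‖ ^ 2 = 0 := by rw [hnormsub, hceq]; ring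
      have : n1 - c • n2 = 0 := by
        have := pow_eq_zero_iff (n := 2) (by norm_num) |>.1 (by rw [← hzero] : ‖n1 - c • n2‖ ^ 2 = 0)
        exact norm_eq_zero.1 this
      rw [hcos, hsin, hs]
      rw [sub_eq_zero] at this
      rw [zero_smul, add_zero]
      exact this
  · have hpos : 0 < √(1 - c ^ 2) := lt_of_le_of_ne (Real.sqrt_nonneg _) (Ne.symm hs)
    have h1c : 0 ≤ 1 - c ^ 2 := by nlinarith [sq_abs c, abs_nonneg c]
    have hsq : √(1 - c ^ 2) ^ 2 = 1 - c ^ 2 := Real.sq_sqrt h1c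
    refine ⟨(√(1 - c ^ 2))⁻¹ • (n1 - c • n2), ?_, ?_, ?_⟩
    · rw [norm_smul, norm_inv, Real.norm_eq_abs, abs_of_pos hpos]
      have hns : ‖n1 - c • n2‖ = √(1 - c ^ 2) := by
        rw [← Real.sqrt_sq (norm_nonneg (n1 - c • n2)), hnormsub]
      rw [hns, inv_mul_cancel₀ hs]
    · rw [real_inner_smul_right, inner_sub_right, real_inner_smul_right]
      rw [real_inner_self_eq_norm_sq, h2, real_inner_comm, ← hc]
      ring_nf
    · rw [hcos, hsin, smul_smul, mul_inv_cancel₀ hs, one_smul]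
      module

end MainAux


section MainThm
open scoped RealInnerProductSpace

set_option maxHeartbeats 1000000 in
theorem Ehat_almost_monotone' (G : Set E3) (hG : IsOpen G)
    (hG1 : G ⊆ Metric.ball (0 : E3) 1) :
    ∃ C : ℝ, 0 < C ∧
      ∀ Fs : (E3 → E3) → ℝ≥0∞, TraceInvariant G Fs →
        ∀ n1 n2 : E3, ‖n1‖ = 1 → ‖n2‖ = 1 → ∀ lam : ℝ, 0 < lam →
          Ehat G Fs n1
            ≤ ENNReal.ofReal (1 + lam) * Ehat G Fs n2
              + ENNReal.ofReal (C * (1 + lam⁻¹) * ‖n1 - n2‖ ^ 2) := by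
  set L := ∫⁻ x : E3, ENNReal.ofReal (Kfun x) with hL
  have hLne : L ≠ ⊤ := Kfun_lintegral_lt_top.ne
  set C0 := L.toReal with hC0
  have hC0nn : 0 ≤ C0 := ENNReal.toReal_nonneg
  have hπ := Real.pi_pos
  refine ⟨π ^ 2 / 4 * C0 + 1, by positivity, ?_⟩
  intro Fs hFs n1 n2 h1 h2 lam hlam
  set c : ℝ := ⟪n1, n2⟫ with hc
  have hcabs : |c| ≤ 1 := by
    have h := abs_real_inner_le_norm n1 n2
    rw [h1, h2] at h; simpa using h
  set θ := Real.arccos c with hθ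
  have hθ0 : 0 ≤ θ := Real.arccos_nonneg c
  have hθpi : θ ≤ π := Real.arccos_le_pi c
  have hcosθ : Real.cos θ = c := Real.cos_arccos (abs_le.1 hcabs).1 (abs_le.1 hcabs).2
  obtain ⟨v, hv1, hvinner, hrep⟩ := exists_unit_ortho_rep n1 n2 h1 h2
  have hchord : ‖n1 - n2‖ ^ 2 = 2 - 2 * c := by
    rw [norm_sub_sq_real, h1, h2, ← hc]; ring
  have hθsq : θ ^ 2 ≤ π ^ 2 / 4 * ‖n1 - n2‖ ^ 2 := by
    have hJ := Real.cos_le_one_sub_mul_cos_sq (x := θ)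
      (by rw [abs_of_nonneg hθ0]; exact hθpi)
    rw [hcosθ] at hJ
    have h4 : 2 / π ^ 2 * θ ^ 2 ≤ 1 - c := by linarith
    rw [hchord]
    calc θ ^ 2 = π ^ 2 / 2 * (2 / π ^ 2 * θ ^ 2) := by field_simp
      _ ≤ π ^ 2 / 2 * (1 - c) := by
          exact mul_le_mul_of_nonneg_left h4 (by positivity)
      _ = π ^ 2 / 4 * (2 - 2 * c) := by ring
  have hBB : ENNReal.ofReal ((1 + lam⁻¹) * θ ^ 2) * L
      ≤ ENNReal.ofReal ((π ^ 2 / 4 * C0 + 1) * (1 + lam⁻¹) * ‖n1 - n2‖ ^ 2) := by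
    have hLC : L = ENNReal.ofReal C0 := by rw [hC0, ENNReal.ofReal_toReal hLne]
    rw [hLC, ← ENNReal.ofReal_mul (by positivity)]
    apply ENNReal.ofReal_le_ofReal
    have h0 : (0:ℝ) ≤ 1 + lam⁻¹ := by positivity
    nlinarith [mul_nonneg (mul_nonneg h0 hC0nn) (sub_nonneg.2 hθsq),
      mul_nonneg h0 (sq_nonneg ‖n1 - n2‖)]
  have hkey : ∀ nn : E3 → E3, AdmissibleC G n2 nn →
      Ehat G Fs n1 ≤ ENNReal.ofReal (1 + lam) * energyC G Fs nn
        + ENNReal.ofReal ((1 + lam⁻¹) * θ ^ 2) * L :=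
    fun nn hadm => key_construction G hG hG1 Fs hFs h2 hv1 hvinner hθ0 hrep hlam nn hadm
  by_cases htop : Ehat G Fs n2 = ⊤
  · rw [htop, ENNReal.mul_top (by
      simp only [Ne, ENNReal.ofReal_eq_zero, not_le]; linarith), top_add]
    exact le_top
  · apply ENNReal.le_of_forall_pos_le_add
    intro ε hε _
    set A := ENNReal.ofReal (1 + lam) with hA
    have hAne : A ≠ ⊤ := ENNReal.ofReal_ne_top
    set δ := (ε : ℝ≥0∞) / A with hδ
    have hδ0 : δ ≠ 0 := by
      rw [hδ, Ne, ENNReal.div_eq_zero_iff]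
      push_neg
      exact ⟨by exact_mod_cast hε.ne', hAne⟩
    have hlt : Ehat G Fs n2 < Ehat G Fs n2 + δ := ENNReal.lt_add_right htop hδ0
    obtain ⟨nn, hnn⟩ := iInf_lt_iff.mp
      (show (⨅ (nn : E3 → E3) (_ : AdmissibleC G n2 nn), energyC G Fs nn)
        < Ehat G Fs n2 + δ from hlt)
    obtain ⟨hadm, hlt'⟩ := iInf_lt_iff.mp hnn
    calc Ehat G Fs n1
        ≤ A * energyC G Fs nn + ENNReal.ofReal ((1 + lam⁻¹) * θ ^ 2) * L := hkey nn hadm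
      _ ≤ A * (Ehat G Fs n2 + δ) + ENNReal.ofReal ((1 + lam⁻¹) * θ ^ 2) * L := by
          exact add_le_add_left (mul_le_mul_right hlt'.le _) _
      _ = (A * Ehat G Fs n2 + A * δ) + ENNReal.ofReal ((1 + lam⁻¹) * θ ^ 2) * L := by
          rw [mul_add]
      _ ≤ (A * Ehat G Fs n2 + ε)
            + ENNReal.ofReal ((π ^ 2 / 4 * C0 + 1) * (1 + lam⁻¹) * ‖n1 - n2‖ ^ 2) :=
          add_le_add (add_le_add_right ENNReal.mul_div_le _) hBB
      _ = A * Ehat G Fs n2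
            + ENNReal.ofReal ((π ^ 2 / 4 * C0 + 1) * (1 + lam⁻¹) * ‖n1 - n2‖ ^ 2) + ε := by
          rw [add_right_comm]

end MainThm

/-- **Almost-monotonicity of the minimal energy under rotation of the far field
(Step 1 of the proof of Theorem 1.4):** for all `n1, n2 ∈ S²` and every `λ > 0`,
`Ê(n1) ≤ (1 + λ) Ê(n2) + C (1 + λ⁻¹) |n1 − n2|²`, where `C` depends only on `G`
(through a fixed cutoff function) and not on `F_s`, `n1`, `n2`, `λ`. -/


theorem Ehat_almost_monotone (G : Set E3) (hG : SmoothBoundedDomain G)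
    (hG1 : G ⊆ Metric.ball (0 : E3) 1) :
    ∃ C : ℝ, 0 < C ∧
      ∀ Fs : (E3 → E3) → ℝ≥0∞, TraceInvariant G Fs →
        ∀ n1 n2 : E3, ‖n1‖ = 1 → ‖n2‖ = 1 → ∀ lam : ℝ, 0 < lam →
          Ehat G Fs n1
            ≤ ENNReal.ofReal (1 + lam) * Ehat G Fs n2
              + ENNReal.ofReal (C * (1 + lam⁻¹) * ‖n1 - n2‖ ^ 2) := by
  exact Ehat_almost_monotone' G hG.1 hG1

end
end
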